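/- Let R be a local ring and let C^1, …, C^r be a family of primitive vectors of R^n in echelon form, generating the submodule M. Let J = {j ∈ {1,…,n} | j ∉ {piv(C^1), …, piv(C^r)}} and let P be the R-submodule of R^n generated by the standard basis vectors e_j with j ∈ J. Then R^n is the internal direct sum of M and P (M ⊓ P = ⊥ and M ⊔ P = ⊤). -/

import Mathlib

/-- Lemma 1.3: over a local ring, the submodule `M` generated by a family of
primitive vectors in echelon form has as a direct complement the free module
generated by the standard basis vectors whose index is not a pivot index. -/
theorem echelon_family_direct_summand
    {R : Type*} [CommRing R] [IsLocalRing R] {n r : ℕ}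
    (C : Fin r → (Fin n → R)) (p : Fin r → Fin n)
    (hpiv_unit : ∀ k, IsUnit (C k (p k)))
    (hpiv_min : ∀ k, ∀ i : Fin n, i < p k → ¬ IsUnit (C k i))
    (hdistinct : Function.Injective p)
    (M P : Submodule R (Fin n → R))
    (hM : M = Submodule.span R (Set.range C))
    (hP : P = Submodule.span R
      ((fun j : Fin n => (Pi.single j (1 : R) : Fin n → R)) '' (Set.range p)ᶜ)) :
    M ⊓ P = ⊥ ∧ M ⊔ P = ⊤ := by
  classical
  set S := {j : Fin n // j ∉ Set.range p} with hS
  set v : Fin r ⊕ S → (Fin n → R) :=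
    Sum.elim C (fun j => Pi.single j.1 (1 : R)) with hv
  set g : Fin r ⊕ S → Fin n := Sum.elim p Subtype.val with hg
  have hginj : Function.Injective g := by
    rintro (k | j) (k' | j') h
    · simp only [g, Sum.elim_inl] at h
      exact congrArg Sum.inl (hdistinct h)
    · exact absurd ⟨k, h⟩ j'.2
    · exact absurd ⟨k', h.symm⟩ j.2
    · simp only [g, Sum.elim_inr] at h
      exact congrArg Sum.inr (Subtype.ext h)
  have hgsurj : Function.Surjective g := by
    intro i
    by_cases hi : i ∈ Set.range p
    · obtain ⟨k, hk⟩ := hi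
      exact ⟨Sum.inl k, hk⟩
    · exact ⟨Sum.inr ⟨i, hi⟩, rfl⟩
  let ε : (Fin r ⊕ S) ≃ Fin n := Equiv.ofBijective g ⟨hginj, hgsurj⟩
  set A : Matrix (Fin n) (Fin n) R := fun i c => v (ε.symm c) i with hA
  -- key facts about columns of A
  have hcol : ∀ c : Fin n, (fun i => A i c) = v (ε.symm c) := fun c => rfl
  have hgε : ∀ c : Fin n, g (ε.symm c) = c := fun c => ε.apply_symm_apply c
  -- determinant is a unit
  have hdet : IsUnit A.det := by
    rw [← IsLocalRing.notMem_maximalIdeal]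
    intro hmem
    have h0 : IsLocalRing.residue R A.det = 0 :=
      (Ideal.Quotient.eq_zero_iff_mem).2 hmem
    set φ := IsLocalRing.residue R
    set A' := A.map φ with hA'
    have htri : A'.BlockTriangular OrderDual.toDual := by
      intro i c hlt
      have hic : i < c := hlt
      simp only [A', Matrix.map_apply]
      rcases hcase : ε.symm c with k | j
      · have hpk : p k = c := by rw [← hgε c, hcase]; rfl
        have hnu : ¬ IsUnit (C k i) := hpiv_min k i (by rw [hpk]; exact hic)
        have hAic : A i c = C k i := by rw [hA]; simp [hcase, hv]
        rw [hAic]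
        exact (Ideal.Quotient.eq_zero_iff_mem).2
          ((IsLocalRing.mem_maximalIdeal _).2 hnu)
      · have hjc : (j : Fin n) = c := by rw [← hgε c, hcase]; rfl
        have hAic : A i c = (Pi.single (j : Fin n) (1 : R) : Fin n → R) i := by
          rw [hA]; simp [hcase, hv]
        have : (Pi.single (j : Fin n) (1 : R) : Fin n → R) i = 0 :=
          Pi.single_eq_of_ne (by rw [hjc]; exact ne_of_lt hic) 1
        rw [hAic, this, map_zero]
    have hdet' : A'.det = ∏ i, A' i i := Matrix.det_of_lowerTriangular A' htri
    have hdiag : ∀ c : Fin n, A' c c ≠ 0 := by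
      intro c
      simp only [A', Matrix.map_apply]
      rcases hcase : ε.symm c with k | j
      · have hpk : p k = c := by rw [← hgε c, hcase]; rfl
        have hAcc : A c c = C k c := by rw [hA]; simp [hcase, hv]
        rw [hAcc, ← hpk]
        intro h0
        exact (IsLocalRing.notMem_maximalIdeal.2 (hpiv_unit k))
          ((Ideal.Quotient.eq_zero_iff_mem).1 h0)
      · have hjc : (j : Fin n) = c := by rw [← hgε c, hcase]; rfl
        have hAcc : A c c = (Pi.single (j : Fin n) (1 : R) : Fin n → R) c := by
          rw [hA]; simp [hcase, hv]
        have h1 : (Pi.single (j : Fin n) (1 : R) : Fin n → R) c = 1 := by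
          rw [hjc]; exact Pi.single_eq_same c 1
        rw [hAcc, h1, map_one]
        exact one_ne_zero
    have : A'.det ≠ 0 := hdet' ▸ Finset.prod_ne_zero_iff.2 (fun i _ => hdiag i)
    exact this (by rw [hA', show A.map ⇑φ = φ.mapMatrix A from rfl, ← RingHom.map_det, h0])
  -- build the basis from the invertible matrix
  have hinv : Invertible A := A.invertibleOfIsUnitDet hdet
  let e : (Fin n → R) ≃ₗ[R] (Fin n → R) := A.toLinearEquiv' hinv
  let b : Module.Basis (Fin n) R (Fin n → R) := (Pi.basisFun R (Fin n)).map e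
  have hb : ∀ c, b c = v (ε.symm c) := by
    intro c
    have : b c = A.mulVec (Pi.single c 1) := by
      simp only [b, Module.Basis.map_apply, Pi.basisFun_apply, e]
      rw [show ((A.toLinearEquiv' hinv) (Pi.single c 1)) =
        Matrix.toLin' A (Pi.single c 1) from rfl, Matrix.toLin'_apply]
    rw [this]
    funext i
    rw [← hcol c]
    simp only [Matrix.mulVec, dotProduct, Pi.single_apply, mul_ite, mul_one,
      mul_zero, Finset.sum_ite_eq', Finset.mem_univ, if_true]
  let B : Module.Basis (Fin r ⊕ S) R (Fin n → R) := b.reindex ε.symm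
  have hB : ∀ s, B s = v s := by
    intro s
    rw [Module.Basis.reindex_apply, hb, Equiv.symm_symm, Equiv.symm_apply_apply]
  have hBv : ⇑B = v := funext hB
  -- identify the spans
  have hMv : M = Submodule.span R (B '' Set.range Sum.inl) := by
    rw [hM, ← Set.range_comp, hBv]
    rfl
  have hPv : P = Submodule.span R (B '' Set.range Sum.inr) := by
    rw [hP, ← Set.range_comp, hBv]
    congr 1
    ext x
    constructor
    · rintro ⟨j, hj, rfl⟩; exact ⟨⟨j, hj⟩, rfl⟩
    · rintro ⟨j, rfl⟩; exact ⟨j.1, j.2, rfl⟩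
  constructor
  · rw [← disjoint_iff, hMv, hPv]
    exact B.linearIndependent.disjoint_span_image
      (Set.isCompl_range_inl_range_inr.disjoint)
  · rw [hMv, hPv, ← Submodule.span_union, ← Set.image_union,
      Set.range_inl_union_range_inr, Set.image_univ, B.span_eq]
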